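/- arXiv:2011.15009 — 2 statements merged into one kernel-verified Lean document; each statement's English description precedes it below -/
import Mathlib

section
/- The homeomorphism group of any Hausdorff zero-dimensional space X is fully transitive: for every k and every pair of k-tuples (x_1,…,x_k), (y_1,…,y_k) of distinct points with x_i similar to y_i for each i, there is a homeomorphism g of X with g(x_i) = y_i for all i. -/
/-- Two points are similar if some homeomorphism between open neighbourhoods
sends one to the other. -/
def PointsSimilar {X : Type*} [TopologicalSpace X] (x y : X) : Prop :=
  ∃ (U V : Set X) (_ : IsOpen U) (_ : IsOpen V) (hx : x ∈ U) (_ : y ∈ V)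
    (h : U ≃ₜ V), (h ⟨x, hx⟩ : X) = y

open Set

/-- Glue a local homeomorphism between two disjoint clopen sets into a global
involution of the space. -/
lemma glue_swap {X : Type*} [TopologicalSpace X] {U V A B : Set X}
    (h : U ≃ₜ V) (hAU : A ⊆ U) (hBV : B ⊆ V)
    (hA : IsClopen A) (hB : IsClopen B) (hAB : ∀ z ∈ A, z ∉ B)
    (mapsAB : ∀ z (hz : z ∈ A), (h ⟨z, hAU hz⟩ : X) ∈ B)
    (mapsBA : ∀ z (hz : z ∈ B), (h.symm ⟨z, hBV hz⟩ : X) ∈ A) :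
    ∃ g : X ≃ₜ X, (∀ z (hz : z ∈ A), g z = (h ⟨z, hAU hz⟩ : X)) ∧
      (∀ z, z ∉ A → z ∉ B → g z = z) := by
  classical
  set f : X → X := fun z =>
    if hz : z ∈ A then (h ⟨z, hAU hz⟩ : X)
    else if hz' : z ∈ B then (h.symm ⟨z, hBV hz'⟩ : X) else z with hf
  have fA : ∀ z (hz : z ∈ A), f z = (h ⟨z, hAU hz⟩ : X) := by
    intro z hz; simp [hf, hz]
  have fB : ∀ z (hz : z ∈ B), f z = (h.symm ⟨z, hBV hz⟩ : X) := by
    intro z hz; have : z ∉ A := fun ha => hAB z ha hz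
    simp [hf, this, hz]
  have fC : ∀ z, z ∉ A → z ∉ B → f z = z := by
    intro z hz hz'; simp [hf, hz, hz']
  have invol : ∀ z, f (f z) = z := by
    intro z
    by_cases hz : z ∈ A
    · rw [fA z hz]
      have hb : (h ⟨z, hAU hz⟩ : X) ∈ B := mapsAB z hz
      rw [fB _ hb]
      have : (⟨(h ⟨z, hAU hz⟩ : X), hBV hb⟩ : V) = h ⟨z, hAU hz⟩ := Subtype.ext rfl
      rw [this, Homeomorph.symm_apply_apply]
    · by_cases hz' : z ∈ B
      · rw [fB z hz']
        have ha : (h.symm ⟨z, hBV hz'⟩ : X) ∈ A := mapsBA z hz'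
        rw [fA _ ha]
        have : (⟨(h.symm ⟨z, hBV hz'⟩ : X), hAU ha⟩ : U) = h.symm ⟨z, hBV hz'⟩ :=
          Subtype.ext rfl
        rw [this, Homeomorph.apply_symm_apply]
      · rw [fC z hz hz', fC z hz hz']
  have contf : Continuous f := by
    rw [continuous_iff_continuousAt]
    intro z
    by_cases hz : z ∈ A
    · have hcA : ContinuousOn f A := by
        rw [continuousOn_iff_continuous_restrict]
        have : A.domRestrict f = fun a : A => (h ⟨(a : X), hAU a.2⟩ : X) := by
          funext a; exact fA a a.2
        rw [this]
        exact continuous_subtype_val.comp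
          (h.continuous.comp (continuous_subtype_val.subtype_mk _))
      exact hcA.continuousAt (hA.isOpen.mem_nhds hz)
    · by_cases hz' : z ∈ B
      · have hcB : ContinuousOn f B := by
          rw [continuousOn_iff_continuous_restrict]
          have : B.domRestrict f = fun b : B => (h.symm ⟨(b : X), hBV b.2⟩ : X) := by
            funext b; exact fB b b.2
          rw [this]
          exact continuous_subtype_val.comp
            (h.symm.continuous.comp (continuous_subtype_val.subtype_mk _))
        exact hcB.continuousAt (hB.isOpen.mem_nhds hz')
      · have hopen : IsOpen (A ∪ B)ᶜ := (hA.isClosed.union hB.isClosed).isOpen_compl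
        have hcC : ContinuousOn f (A ∪ B)ᶜ := by
          rw [continuousOn_iff_continuous_restrict]
          have : ((A ∪ B)ᶜ).domRestrict f = fun c : ((A ∪ B)ᶜ : Set X) => (c : X) := by
            funext c
            exact fC c (fun hc => c.2 (Or.inl hc)) (fun hc => c.2 (Or.inr hc))
          rw [this]; exact continuous_subtype_val
        exact hcC.continuousAt (hopen.mem_nhds (by simp [hz, hz']))
  refine ⟨⟨⟨f, f, invol, invol⟩, contf, contf⟩, fA, fC⟩

/-- From `Similar x y` plus zero-dimensionality one can move `x` to `y` with a
global homeomorphism supported in `Wx ∪ Wy`. -/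
lemma move_point {X : Type*} [TopologicalSpace X] [T2Space X]
    (hzd : ∀ (x : X) (U : Set X), IsOpen U → x ∈ U →
      ∃ V : Set X, IsClopen V ∧ x ∈ V ∧ V ⊆ U)
    {x y : X} (hsim : PointsSimilar x y) {Wx Wy : Set X}
    (hWx : IsOpen Wx) (hWy : IsOpen Wy) (hxW : x ∈ Wx) (hyW : y ∈ Wy) :
    ∃ g : X ≃ₜ X, g x = y ∧ ∀ z, z ∉ Wx → z ∉ Wy → g z = z := by
  classical
  by_cases hxy : x = y
  · exact ⟨Homeomorph.refl X, hxy ▸ rfl, fun z _ _ => rfl⟩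
  obtain ⟨P, Q, hP, hQ, hxP, hyQ, hPQ⟩ := t2_separation hxy
  obtain ⟨U, V, hU, hV, hxU, hyV, h, hhy⟩ := hsim
  -- clopen C₀ around y inside V ∩ Wy ∩ Q
  obtain ⟨C₀, hC₀, hyC₀, hC₀sub⟩ := hzd y (V ∩ Wy ∩ Q)
    ((hV.inter hWy).inter hQ) ⟨⟨hyV, hyW⟩, hyQ⟩
  have hC₀V : C₀ ⊆ V := fun z hz => (hC₀sub hz).1.1
  -- open set val '' (h ⁻¹' (val ⁻¹' C₀)) around x
  set s : Set U := h ⁻¹' (Subtype.val ⁻¹' C₀) with hs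
  have hsopen : IsOpen s := h.continuous.isOpen_preimage _
    (hC₀.isOpen.preimage continuous_subtype_val)
  have hso : IsOpen (Subtype.val '' s : Set X) := hU.isOpenMap_subtype_val _ hsopen
  have hxs : x ∈ (Subtype.val '' s : Set X) := by
    refine ⟨⟨x, hxU⟩, ?_, rfl⟩
    show (h ⟨x, hxU⟩ : X) ∈ C₀
    rw [hhy]; exact hyC₀
  -- clopen A around x inside (val '' s) ∩ Wx ∩ P
  obtain ⟨A, hA, hxA, hAsub⟩ := hzd x ((Subtype.val '' s) ∩ Wx ∩ P)
    ((hso.inter hWx).inter hP) ⟨⟨hxs, hxW⟩, hxP⟩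
  have hAU : A ⊆ U := fun z hz => by
    obtain ⟨t, _, rfl⟩ := (hAsub hz).1.1; exact t.2
  have hAWx : A ⊆ Wx := fun z hz => (hAsub hz).1.2
  have hAP : A ⊆ P := fun z hz => (hAsub hz).2
  -- key: image of points of A under h lies in C₀
  have hAim : ∀ z (hz : z ∈ A), (h ⟨z, hAU hz⟩ : X) ∈ C₀ := by
    intro z hz
    obtain ⟨t, ht, htv⟩ := (hAsub hz).1.1
    have : (⟨z, hAU hz⟩ : U) = t := Subtype.ext htv.symm
    rw [this]; exact ht
  -- B := image of A under h
  set B : Set X := Subtype.val '' (h '' (Subtype.val ⁻¹' A)) with hBdef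
  have hBC₀ : B ⊆ C₀ := by
    rintro z ⟨t, ⟨u, hu, rfl⟩, rfl⟩
    have : u = ⟨(u : X), hAU hu⟩ := Subtype.ext rfl
    rw [this]; exact hAim u hu
  have hBV : B ⊆ V := fun z hz => hC₀V (hBC₀ hz)
  have hBWy : B ⊆ Wy := fun z hz => (hC₀sub (hBC₀ hz)).1.2
  have hBQ : B ⊆ Q := fun z hz => (hC₀sub (hBC₀ hz)).2
  have hyB : y ∈ B := by
    refine ⟨h ⟨x, hxU⟩, ⟨⟨x, hxU⟩, hxA, rfl⟩, hhy⟩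
  have hBopen : IsOpen B := by
    apply hV.isOpenMap_subtype_val
    exact h.isOpenMap _ (hA.isOpen.preimage continuous_subtype_val)
  have hBclosed : IsClosed B := by
    have h1 : IsClosed (h '' (Subtype.val ⁻¹' A) : Set V) := by
      rw [Homeomorph.isClosed_image]
      exact hA.isClosed.preimage continuous_subtype_val
    obtain ⟨F, hF, hFeq⟩ := isClosed_induced_iff.1 h1
    have hBeq : B = C₀ ∩ F := by
      apply Subset.antisymm
      · intro z hz
        refine ⟨hBC₀ hz, ?_⟩
        obtain ⟨t, ht, rfl⟩ := hz
        have : t ∈ Subtype.val ⁻¹' F := by rw [hFeq]; exact ht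
        exact this
      · rintro z ⟨hzC, hzF⟩
        have hzV : z ∈ V := hC₀V hzC
        have : (⟨z, hzV⟩ : V) ∈ Subtype.val ⁻¹' F := hzF
        rw [hFeq] at this
        exact ⟨⟨z, hzV⟩, this, rfl⟩
    rw [hBeq]
    exact hC₀.isClosed.inter hF
  have hAB : ∀ z ∈ A, z ∉ B := fun z hzA hzB =>
    disjoint_left.1 hPQ (hAP hzA) (hBQ hzB)
  have mapsAB : ∀ z (hz : z ∈ A), (h ⟨z, hAU hz⟩ : X) ∈ B :=
    fun z hz => ⟨h ⟨z, hAU hz⟩, ⟨⟨z, hAU hz⟩, hz, rfl⟩, rfl⟩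
  have mapsBA : ∀ z (hz : z ∈ B), (h.symm ⟨z, hBV hz⟩ : X) ∈ A := by
    rintro z ⟨t, ⟨u, hu, rfl⟩, rfl⟩
    have e1 : (⟨(h u : X), hBV ⟨h u, ⟨u, hu, rfl⟩, rfl⟩⟩ : V) = h u := Subtype.ext rfl
    rw [e1, Homeomorph.symm_apply_apply]
    exact hu
  obtain ⟨g, hgA, hgC⟩ := glue_swap h hAU hBV hA ⟨hBclosed, hBopen⟩ hAB mapsAB mapsBA
  refine ⟨g, ?_, fun z hz hz' => hgC z (fun hc => hz (hAWx hc)) (fun hc => hz' (hBWy hc))⟩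
  rw [hgA x hxA]
  have : (⟨x, hAU hxA⟩ : U) = ⟨x, hxU⟩ := Subtype.ext rfl
  rw [this]; exact hhy

/-- Similarity transports along global homeomorphisms. -/
lemma similar_comp {X : Type*} [TopologicalSpace X] (g : X ≃ₜ X) {x y : X}
    (hs : PointsSimilar x y) : PointsSimilar (g x) y := by
  obtain ⟨U, V, hU, hV, hx, hy, h, hhy⟩ := hs
  refine ⟨g '' U, V, g.isOpen_image.2 hU, hV, ⟨x, hx, rfl⟩, hy,
    (g.image U).symm.trans h, ?_⟩
  have e1 : (⟨g x, ⟨x, hx, rfl⟩⟩ : (g '' U : Set X)) = g.image U ⟨x, hx⟩ :=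
    Subtype.ext rfl
  simp only [Homeomorph.trans_apply, e1, Homeomorph.symm_apply_apply]
  exact hhy


/-- The homeomorphism group of a Hausdorff zero-dimensional space is fully
transitive. -/
theorem fully_transitive_of_zeroDim (X : Type*) [TopologicalSpace X] [T2Space X]
    (hzd : ∀ (x : X) (U : Set X), IsOpen U → x ∈ U →
      ∃ V : Set X, IsClopen V ∧ x ∈ V ∧ V ⊆ U) :
    ∀ (k : ℕ) (x y : Fin k → X), Function.Injective x → Function.Injective y →
      (∀ i, PointsSimilar (x i) (y i)) →
      ∃ g : X ≃ₜ X, ∀ i, g (x i) = y i := by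
  intro k
  induction k with
  | zero => exact fun x y _ _ _ => ⟨Homeomorph.refl X, fun i => i.elim0⟩
  | succ k ih =>
    intro x y hxinj hyinj hsim
    obtain ⟨g₁, hg₁⟩ := ih (fun i => x i.succ) (fun i => y i.succ)
      (fun i j hij => Fin.succ_injective k (hxinj hij))
      (fun i j hij => Fin.succ_injective k (hyinj hij))
      (fun i => hsim i.succ)
    set S : Set X := Set.range (fun i : Fin k => y i.succ) with hS
    have hSfin : S.Finite := Set.finite_range _
    have hSc : IsOpen Sᶜ := hSfin.isClosed.isOpen_compl
    have hx0 : g₁ (x 0) ∈ Sᶜ := by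
      rintro ⟨j, hj⟩
      simp only at hj
      rw [← hg₁ j] at hj
      exact Fin.succ_ne_zero j (hxinj (g₁.injective hj))
    have hy0 : y 0 ∈ Sᶜ := by
      rintro ⟨j, hj⟩
      simp only at hj
      exact Fin.succ_ne_zero j (hyinj hj)
    obtain ⟨g₂, hg₂, hg₂fix⟩ := move_point hzd (similar_comp g₁ (hsim 0))
      hSc hSc hx0 hy0
    refine ⟨g₁.trans g₂, fun i => ?_⟩
    refine Fin.cases ?_ (fun j => ?_) i
    · exact hg₂
    · show g₂ (g₁ (x j.succ)) = y j.succ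
      rw [hg₁ j]
      exact hg₂fix _ (not_not_intro ⟨j, rfl⟩) (not_not_intro ⟨j, rfl⟩)
end

section
/- If α and β are infinite ordinals, then the ordinal spaces α + β + 1 and β + α + 1 (with their order topologies) are homeomorphic. -/
open Set Ordinal

/-- A clopen set splits a space as a disjoint sum. -/
noncomputable def homeoSumCompl {X : Type*} [TopologicalSpace X] (s : Set X)
    (hs : IsClopen s) : (s ⊕ (sᶜ : Set X)) ≃ₜ X := by
  classical
  have hcoe : ⇑(Equiv.Set.sumCompl s) = Sum.elim (Subtype.val) (Subtype.val) := by
    funext x; cases x <;> simp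
  refine (Equiv.Set.sumCompl s).toHomeomorphOfContinuousOpen ?_ ?_
  · rw [hcoe]; exact continuous_subtype_val.sumElim continuous_subtype_val
  · rw [hcoe]
    exact (hs.isOpen.isOpenMap_subtype_val).sumElim
      (hs.compl.isOpen.isOpenMap_subtype_val)

theorem key (α β : Ordinal) (hβ : Ordinal.omega0 ≤ β) :
    Nonempty ((Set.Iio (α + β + 1)) ≃ₜ ((Set.Iio (α + 1)) ⊕ (Set.Iio (β + 1)))) := by
  classical
  have hβ0 : (0 : Ordinal) < β := lt_of_lt_of_le omega0_pos hβ
  have hlt1 : ∀ x y : Ordinal, x < y + 1 ↔ x ≤ y := by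
    intro x y; rw [Ordinal.add_one_eq_succ, Order.lt_succ_iff]
  have hmemα : α < α + β + 1 :=
    lt_of_le_of_lt le_self_add (lt_add_one _)
  have hmemα1 : α + 1 < α + β + 1 := by
    rw [add_assoc]
    exact (add_lt_add_iff_left α).2 ((hlt1 1 β).2 (Order.one_le_iff_pos.2 hβ0))
  set X := Set.Iio (α + β + 1)
  set a : X := ⟨α, hmemα⟩ with ha
  set s : Set X := Set.Iic a with hs_def
  -- s is clopen
  have hs : IsClopen s := by
    constructor
    · exact isClosed_Iic
    · have : s = Set.Iio (⟨α + 1, hmemα1⟩ : X) := by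
        ext x
        simp only [hs_def, Set.mem_Iic, Set.mem_Iio, ← Subtype.coe_lt_coe,
          ← Subtype.coe_le_coe]
        exact (hlt1 _ _).symm
      rw [this]; exact isOpen_Iio
  -- the complement is Ioi a
  have hsc : sᶜ = Set.Ioi a := Set.compl_Iic
  -- order iso Iio (α+1) ≃o s
  have g : Set.Iio (α + 1) ≃o s := by
    refine StrictMono.orderIsoOfSurjective
      (fun y => ⟨⟨y.1, lt_of_lt_of_le y.2 (le_of_lt hmemα1)⟩, (hlt1 _ _).1 y.2⟩) ?_ ?_
    · intro y₁ y₂ h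
      simpa [← Subtype.coe_lt_coe] using h
    · rintro ⟨⟨x, hx⟩, hxa⟩
      exact ⟨⟨x, (hlt1 _ _).2 hxa⟩, rfl⟩
  -- order iso Iio (β+1) ≃o sᶜ
  have f : Set.Iio (β + 1) ≃o (sᶜ : Set X) := by
    have hf1 : ∀ y : Set.Iio (β + 1), α + 1 + ↑y < α + β + 1 := by
      intro y
      have hy : (y : Ordinal) ≤ β := (hlt1 _ _).1 y.2
      have h1y : 1 + (y : Ordinal) ≤ β :=
        le_trans (add_le_add_right hy 1) (le_of_eq (one_add_of_omega0_le hβ))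
      calc α + 1 + ↑y = α + (1 + ↑y) := by rw [add_assoc]
        _ < α + (β + 1) := (add_lt_add_iff_left α).2 (lt_of_le_of_lt h1y (lt_add_one β))
        _ = α + β + 1 := by rw [add_assoc]
    have hf2 : ∀ y : Set.Iio (β + 1),
        (⟨α + 1 + ↑y, hf1 y⟩ : X) ∈ (sᶜ : Set X) := by
      intro y
      simp only [hsc, Set.mem_Ioi, ← Subtype.coe_lt_coe]
      exact lt_of_lt_of_le (lt_add_one α) le_self_add
    refine StrictMono.orderIsoOfSurjective
      (fun y => ⟨⟨α + 1 + ↑y, hf1 y⟩, hf2 y⟩) ?_ ?_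
    · intro y₁ y₂ h
      have : (y₁ : Ordinal) < y₂ := h
      simpa [← Subtype.coe_lt_coe] using (add_lt_add_iff_left (α + 1)).2 this
    · rintro ⟨⟨x, hx⟩, hxc⟩
      have hax : α < x := by
        rw [hsc] at hxc
        simpa [← Subtype.coe_lt_coe] using hxc
      have hle : α + 1 ≤ x := by
        rw [Ordinal.add_one_eq_succ, Order.succ_le_iff]; exact hax
      have hrec : α + 1 + (x - (α + 1)) = x := Ordinal.add_sub_cancel_of_le hle
      have hy : x - (α + 1) < β + 1 := by
        have : α + 1 + (x - (α + 1)) < α + 1 + (β + 1) := by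
          rw [hrec]
          calc x < α + β + 1 := hx
            _ = α + (1 + β + 1) := by rw [one_add_of_omega0_le hβ, add_assoc]
            _ = α + 1 + (β + 1) := by rw [add_assoc, add_assoc]
        exact (add_lt_add_iff_left (α + 1)).1 this
      refine ⟨⟨x - (α + 1), hy⟩, ?_⟩
      apply Subtype.ext; apply Subtype.ext
      exact hrec
  -- OrderTopology instances
  haveI : (sᶜ : Set X).OrdConnected := by rw [hsc]; exact Set.ordConnected_Ioi
  exact ⟨((homeoSumCompl s hs).symm).trans
    (Homeomorph.sumCongr g.toHomeomorph.symm f.toHomeomorph.symm)⟩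

/-- For infinite ordinals `α`, `β`, the ordinal spaces `α + β + 1` and
`β + α + 1` are homeomorphic. -/
theorem ordinal_add_comm_homeo (α β : Ordinal)
    (hα : Ordinal.omega0 ≤ α) (hβ : Ordinal.omega0 ≤ β) :
    Nonempty ((Set.Iio (α + β + 1)) ≃ₜ (Set.Iio (β + α + 1))) := by
  obtain ⟨h1⟩ := key α β hβ
  obtain ⟨h2⟩ := key β α hα
  exact ⟨h1.trans ((Homeomorph.sumComm _ _).trans h2.symm)⟩
end
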